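/- Let V : R → ℂ²⊗R′ be a unitary, |Φ⟩ the EPR state (|00⟩+|11⟩)/√2 on X⊗Y with X,Y qubits, and define the isometry W = (I ⊗ V*)·SWAP·(|Φ⟩ ⊗ V) : R → X⊗Y⊗R, where SWAP acts on X and the qubit output of V. Then for any operator R on R, W* R W = (1/4) Σ_{i=0}^3 (V*(σ_i⊗I)V) R (V*(σ_i⊗I)V), where σ_0,…,σ_3 are the Pauli matrices I, X, Y, Z. -/

import Mathlib

open Matrix Kronecker

/-- The four Pauli matrices `I, X, Y, Z`. -/
noncomputable def pauli : Fin 4 → Matrix (Fin 2) (Fin 2) ℂ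
  | 0 => 1
  | 1 => !![0, 1; 1, 0]
  | 2 => !![0, -Complex.I; Complex.I, 0]
  | 3 => !![1, 0; 0, -1]

/-- The map `|Φ⟩ ⊗ V : R → (X⊗Y) ⊗ (B⊗R′)`, where `|Φ⟩ = (|00⟩+|11⟩)/√2` is the EPR
state on the qubits `X, Y` and `V : R → B⊗R′`. -/
noncomputable def phiTensorV {m : ℕ} (V : Matrix (Fin 2 × Fin m) (Fin (2 * m)) ℂ) :
    Matrix ((Fin 2 × Fin 2) × (Fin 2 × Fin m)) (Fin (2 * m)) ℂ :=
  Matrix.of fun p r =>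
    (if p.1.1 = p.1.2 then (((Real.sqrt 2)⁻¹ : ℝ) : ℂ) else 0) * V p.2 r

/-- The SWAP gate exchanging the qubit `X` with the qubit `B`, acting on
`(X⊗Y) ⊗ (B⊗R′)`. -/
def swapXB {m : ℕ} :
    Matrix ((Fin 2 × Fin 2) × (Fin 2 × Fin m)) ((Fin 2 × Fin 2) × (Fin 2 × Fin m)) ℂ :=
  Matrix.of fun p q =>
    if p.1.1 = q.2.1 ∧ p.1.2 = q.1.2 ∧ p.2.1 = q.1.1 ∧ p.2.2 = q.2.2 then 1 else 0

/- ---------- auxiliary lemmas ---------- -/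

lemma pauli_sq (i : Fin 4) : pauli i * pauli i = 1 := by
  fin_cases i <;>
    simp [pauli, Matrix.mul_fin_two, Matrix.one_fin_two, Complex.I_mul_I]

lemma kron_one_conjT {n p : Type*} [Fintype p] [DecidableEq p]
    (A : Matrix n n ℂ) : (A ⊗ₖ (1 : Matrix p p ℂ))ᴴ = Aᴴ ⊗ₖ (1 : Matrix p p ℂ) := by
  ext ⟨a, k⟩ ⟨b, l⟩
  simp [conjTranspose_apply, Matrix.one_apply, apply_ite star, eq_comm]

lemma stdBasis_conjT {n : Type*} [DecidableEq n] (x y : n) :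
    (Matrix.single x y (1 : ℂ))ᴴ = Matrix.single y x (1 : ℂ) := by
  ext a b
  simp [conjTranspose_apply, Matrix.single, apply_ite star, and_comm]

lemma sandwich {m : ℕ} (V : Matrix (Fin 2 × Fin m) (Fin (2 * m)) ℂ)
    (A B : Matrix (Fin 2 × Fin m) (Fin 2 × Fin m) ℂ)
    (R : Matrix (Fin (2 * m)) (Fin (2 * m)) ℂ) :
    (Vᴴ * A * V) * R * (Vᴴ * B * V) = Vᴴ * (A * (V * R * Vᴴ) * B) * V := by
  simp only [Matrix.mul_assoc]

lemma blocks {ι κ n : Type*} [Fintype ι] [Fintype κ] [Fintype n] [DecidableEq ι]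
    (W : Matrix (ι × κ) n ℂ) (R : Matrix κ κ ℂ) :
    Wᴴ * ((1 : Matrix ι ι ℂ) ⊗ₖ R) * W =
      ∑ p : ι, (Matrix.of fun s r => W (p, s) r)ᴴ * R * (Matrix.of fun s r => W (p, s) r) := by
  ext r r'
  simp only [Matrix.sum_apply, Matrix.mul_apply, conjTranspose_apply, kroneckerMap_apply,
    Matrix.one_apply, Matrix.of_apply, Fintype.sum_prod_type, ite_mul, one_mul, zero_mul,
    mul_ite, mul_zero, mul_one, Finset.sum_ite_eq, Finset.sum_ite_eq', Finset.mem_univ, if_true]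
  refine Finset.sum_congr rfl fun x _ => Finset.sum_congr rfl fun k _ => ?_
  congr 1
  rw [Finset.sum_comm]
  simp [Finset.sum_ite_eq']

lemma pauli_conj {m : ℕ} (M : Matrix (Fin 2 × Fin m) (Fin 2 × Fin m) ℂ) :
    ∑ i : Fin 4, (pauli i ⊗ₖ (1 : Matrix (Fin m) (Fin m) ℂ)) * M *
        (pauli i ⊗ₖ (1 : Matrix (Fin m) (Fin m) ℂ)) =
      (2 : ℂ) • ∑ x : Fin 2, ∑ y : Fin 2,
        (Matrix.single x y (1 : ℂ) ⊗ₖ (1 : Matrix (Fin m) (Fin m) ℂ)) * M *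
          (Matrix.single y x (1 : ℂ) ⊗ₖ (1 : Matrix (Fin m) (Fin m) ℂ)) := by
  ext ⟨a, k⟩ ⟨d, k'⟩
  simp only [Matrix.sum_apply, Matrix.smul_apply, Matrix.mul_apply, kroneckerMap_apply,
    Matrix.one_apply, Matrix.single, Matrix.of_apply, Fintype.sum_prod_type,
    ite_mul, one_mul, zero_mul, mul_ite, mul_zero, mul_one,
    Finset.sum_ite_eq, Finset.sum_ite_eq', Finset.mem_univ, if_true,
    ite_and, Finset.sum_ite_irrel, Finset.sum_const_zero, smul_eq_mul]
  fin_cases a <;> fin_cases d <;>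
    simp [pauli, Fin.sum_univ_four, Fin.sum_univ_two, Matrix.one_apply] <;> ring_nf <;>
    simp [Complex.I_sq] <;> ring

lemma W_apply {m : ℕ} (V : Matrix (Fin 2 × Fin m) (Fin (2 * m)) ℂ)
    (x y : Fin 2) (s r : Fin (2 * m)) :
    ((((1 : Matrix (Fin 2 × Fin 2) (Fin 2 × Fin 2) ℂ) ⊗ₖ Vᴴ) * (swapXB (m := m)) * phiTensorV V :
        Matrix ((Fin 2 × Fin 2) × Fin (2 * m)) (Fin (2 * m)) ℂ))
        ((x, y), s) r =
      (((Real.sqrt 2)⁻¹ : ℝ) : ℂ) * ∑ k : Fin m, star (V (y, k) s) * V (x, k) r := by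
  simp only [Matrix.mul_apply, swapXB, phiTensorV, Matrix.of_apply, kroneckerMap_apply,
    Matrix.one_apply, conjTranspose_apply, Fintype.sum_prod_type, ite_mul, one_mul, zero_mul,
    mul_ite, mul_zero, mul_one, Finset.sum_ite_eq, Finset.sum_ite_eq', Finset.mem_univ, if_true,
    ite_and, Finset.sum_ite_irrel, Finset.sum_const_zero, Prod.mk.injEq]
  rw [Finset.mul_sum]
  exact Finset.sum_congr rfl fun k _ => by ring

lemma W_block {m : ℕ} (V : Matrix (Fin 2 × Fin m) (Fin (2 * m)) ℂ) (x y : Fin 2) :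
    (Matrix.of fun s r =>
        ((((1 : Matrix (Fin 2 × Fin 2) (Fin 2 × Fin 2) ℂ) ⊗ₖ Vᴴ) * (swapXB (m := m)) * phiTensorV V :
          Matrix ((Fin 2 × Fin 2) × Fin (2 * m)) (Fin (2 * m)) ℂ)) ((x, y), s) r) =
      ((((Real.sqrt 2)⁻¹ : ℝ) : ℂ)) •
        (Vᴴ * (Matrix.single y x (1 : ℂ) ⊗ₖ (1 : Matrix (Fin m) (Fin m) ℂ)) * V) := by
  ext s r
  rw [Matrix.of_apply, W_apply]
  simp only [Matrix.smul_apply, smul_eq_mul, Matrix.mul_apply, conjTranspose_apply,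
    kroneckerMap_apply, Matrix.one_apply, Matrix.single, Matrix.of_apply,
    Fintype.sum_prod_type, ite_mul, one_mul, zero_mul, mul_ite, mul_zero, mul_one,
    Finset.sum_ite_eq, Finset.sum_ite_eq', Finset.mem_univ, if_true,
    ite_and, Finset.sum_ite_irrel, Finset.sum_const_zero]

/-- For a unitary `V : R → ℂ²⊗R′`, the isometry `W = (I⊗V*)·SWAP·(|Φ⟩⊗V)` satisfies
`W*(I⊗R)W = (1/4)∑ᵢ (V*(σᵢ⊗I)V) R (V*(σᵢ⊗I)V)` for every operator `R` on `R`. -/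
theorem teleport_depolarize {m : ℕ} (V : Matrix (Fin 2 × Fin m) (Fin (2 * m)) ℂ)
    (hV1 : Vᴴ * V = 1) (hV2 : V * Vᴴ = 1) :
    ∀ W : Matrix ((Fin 2 × Fin 2) × Fin (2 * m)) (Fin (2 * m)) ℂ,
      W = ((1 : Matrix (Fin 2 × Fin 2) (Fin 2 × Fin 2) ℂ) ⊗ₖ Vᴴ) * (swapXB (m := m)) * phiTensorV V →
      Wᴴ * W = 1 ∧
      ∀ R : Matrix (Fin (2 * m)) (Fin (2 * m)) ℂ,
        Wᴴ * ((1 : Matrix (Fin 2 × Fin 2) (Fin 2 × Fin 2) ℂ) ⊗ₖ R) * W =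
          (4 : ℂ)⁻¹ • ∑ i : Fin 4,
            (Vᴴ * (pauli i ⊗ₖ (1 : Matrix (Fin m) (Fin m) ℂ)) * V) * R *
              (Vᴴ * (pauli i ⊗ₖ (1 : Matrix (Fin m) (Fin m) ℂ)) * V) := by
  intro W hW
  set c : ℂ := (((Real.sqrt 2)⁻¹ : ℝ) : ℂ) with hc
  have hcc : star c * c = (2 : ℂ)⁻¹ := by
    rw [hc, Complex.star_def, Complex.conj_ofReal, ← Complex.ofReal_mul, ← mul_inv,
      Real.mul_self_sqrt (by norm_num)]
    norm_num
  have key : ∀ R : Matrix (Fin (2 * m)) (Fin (2 * m)) ℂ,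
      Wᴴ * ((1 : Matrix (Fin 2 × Fin 2) (Fin 2 × Fin 2) ℂ) ⊗ₖ R) * W =
        (4 : ℂ)⁻¹ • ∑ i : Fin 4,
          (Vᴴ * (pauli i ⊗ₖ (1 : Matrix (Fin m) (Fin m) ℂ)) * V) * R *
            (Vᴴ * (pauli i ⊗ₖ (1 : Matrix (Fin m) (Fin m) ℂ)) * V) := by
    intro R
    have hR : ∑ i : Fin 4,
        (Vᴴ * (pauli i ⊗ₖ (1 : Matrix (Fin m) (Fin m) ℂ)) * V) * R *
          (Vᴴ * (pauli i ⊗ₖ (1 : Matrix (Fin m) (Fin m) ℂ)) * V) =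
        Vᴴ * (∑ i : Fin 4, (pauli i ⊗ₖ (1 : Matrix (Fin m) (Fin m) ℂ)) * (V * R * Vᴴ) *
          (pauli i ⊗ₖ (1 : Matrix (Fin m) (Fin m) ℂ))) * V := by
      rw [Matrix.mul_sum, Matrix.sum_mul]
      exact Finset.sum_congr rfl fun i _ => by rw [sandwich]
    rw [hR, pauli_conj, hW, blocks, Fintype.sum_prod_type]
    have hblock : ∀ x y : Fin 2,
        (Matrix.of fun s r =>
          ((((1 : Matrix (Fin 2 × Fin 2) (Fin 2 × Fin 2) ℂ) ⊗ₖ Vᴴ) * (swapXB (m := m)) * phiTensorV V :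
            Matrix ((Fin 2 × Fin 2) × Fin (2 * m)) (Fin (2 * m)) ℂ)) ((x, y), s) r)ᴴ * R *
          (Matrix.of fun s r =>
          ((((1 : Matrix (Fin 2 × Fin 2) (Fin 2 × Fin 2) ℂ) ⊗ₖ Vᴴ) * (swapXB (m := m)) * phiTensorV V :
            Matrix ((Fin 2 × Fin 2) × Fin (2 * m)) (Fin (2 * m)) ℂ)) ((x, y), s) r) =
        (2 : ℂ)⁻¹ •
          (Vᴴ * ((Matrix.single x y (1 : ℂ) ⊗ₖ (1 : Matrix (Fin m) (Fin m) ℂ)) *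
            (V * R * Vᴴ) *
            (Matrix.single y x (1 : ℂ) ⊗ₖ (1 : Matrix (Fin m) (Fin m) ℂ))) * V) := by
      intro x y
      rw [W_block, ← hc, Matrix.conjTranspose_smul, Matrix.conjTranspose_mul,
        Matrix.conjTranspose_mul, Matrix.conjTranspose_conjTranspose, kron_one_conjT,
        stdBasis_conjT, Matrix.smul_mul, Matrix.smul_mul, Matrix.mul_smul, smul_smul, hcc]
      congr 1
      simp only [Matrix.mul_assoc]
    simp only [hblock]
    simp only [← Finset.smul_sum]
    rw [Matrix.mul_smul, Matrix.smul_mul, smul_smul]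
    have h42 : (4 : ℂ)⁻¹ * 2 = 2⁻¹ := by norm_num
    rw [h42]
    congr 1
    rw [Matrix.mul_sum, Matrix.sum_mul]
    refine Finset.sum_congr rfl fun x _ => ?_
    rw [Matrix.mul_sum, Matrix.sum_mul]
  refine ⟨?_, key⟩
  have h1 : Wᴴ * W = Wᴴ * ((1 : Matrix (Fin 2 × Fin 2) (Fin 2 × Fin 2) ℂ) ⊗ₖ
      (1 : Matrix (Fin (2 * m)) (Fin (2 * m)) ℂ)) * W := by
    rw [Matrix.one_kronecker_one, Matrix.mul_one]
  rw [h1, key 1]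
  have h2 : ∀ i : Fin 4,
      (Vᴴ * (pauli i ⊗ₖ (1 : Matrix (Fin m) (Fin m) ℂ)) * V) * (1 : Matrix _ _ ℂ) *
        (Vᴴ * (pauli i ⊗ₖ (1 : Matrix (Fin m) (Fin m) ℂ)) * V) = 1 := by
    intro i
    rw [sandwich, Matrix.mul_one, hV2, Matrix.mul_one, ← Matrix.mul_kronecker_mul, pauli_sq,
      Matrix.one_mul, Matrix.one_kronecker_one, Matrix.mul_one, hV1]
  simp only [h2, Finset.sum_const, Finset.card_univ, Fintype.card_fin]
  rw [← Nat.cast_smul_eq_nsmul ℂ, smul_smul]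
  norm_num
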